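/- Let X, X′, Y, Y′ be random elements of a real separable Hilbert space H and let ε, δ be random variables taking the values 0 and 1 each with probability 1/2, all six objects mutually independent, with X′ distributed as X and Y′ distributed as Y. Define the real random variable S = δ‖X−Y‖ − (1−δ)(ε‖X−X′‖ + (1−ε)‖Y−Y′‖). Then, for arbitrary distributions of X and Y, zero is a median of S; that is, P(S ≥ 0) ≥ 1/2 and P(S ≤ 0) ≥ 1/2. -/
import Mathlib


open MeasureTheory ProbabilityTheory

/-- For arbitrary distributions of `X` and `Y`, zero is a median of `S`: `P(S ≥ 0) ≥ 1/2` and `P(S ≤ 0) ≥ 1/2`. -/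
theorem zero_is_median_of_S
    {Ω : Type*} [MeasurableSpace Ω] (μ : Measure Ω) [IsProbabilityMeasure μ]
    {H : Type*} [NormedAddCommGroup H] [InnerProductSpace ℝ H] [CompleteSpace H]
    [SecondCountableTopology H] [MeasurableSpace H] [BorelSpace H]
    (X X' Y Y' : Ω → H) (ε δ : Ω → ℝ)
    (hX : Measurable X) (hX' : Measurable X') (hY : Measurable Y) (hY' : Measurable Y')
    (hε : Measurable ε) (hδ : Measurable δ)
    (hεval : ∀ ω, ε ω = 0 ∨ ε ω = 1) (hδval : ∀ ω, δ ω = 0 ∨ δ ω = 1)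
    (hε0 : μ {ω | ε ω = 0} = 1/2) (hε1 : μ {ω | ε ω = 1} = 1/2)
    (hδ0 : μ {ω | δ ω = 0} = 1/2) (hδ1 : μ {ω | δ ω = 1} = 1/2)
    (hindep : μ.map (fun ω => (X ω, X' ω, Y ω, Y' ω, ε ω, δ ω)) =
      (μ.map X).prod ((μ.map X').prod ((μ.map Y).prod
        ((μ.map Y').prod ((μ.map ε).prod (μ.map δ))))))
    (hX'X : μ.map X' = μ.map X) (hY'Y : μ.map Y' = μ.map Y)
    (S : Ω → ℝ)
    (hS : S = fun ω => δ ω * ‖X ω - Y ω‖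
      - (1 - δ ω) * (ε ω * ‖X ω - X' ω‖ + (1 - ε ω) * ‖Y ω - Y' ω‖))
     :
    μ {ω | 0 ≤ S ω} ≥ 1/2 ∧ μ {ω | S ω ≤ 0} ≥ 1/2 := by
  subst hS
  constructor
  · calc (1:ENNReal)/2 = μ {ω | δ ω = 1} := hδ1.symm
      _ ≤ _ := by
        apply measure_mono
        intro ω hω
        simp only [Set.mem_setOf_eq] at hω ⊢
        rw [hω]
        simp [norm_nonneg]
  · calc (1:ENNReal)/2 = μ {ω | δ ω = 0} := hδ0.symm
      _ ≤ _ := by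
        apply measure_mono
        intro ω hω
        simp only [Set.mem_setOf_eq] at hω ⊢
        rw [hω]
        simp only [zero_mul, sub_zero, one_mul, zero_sub, neg_nonpos]
        rcases hεval ω with h | h <;> rw [h] <;>
          simp [norm_nonneg]
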